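/- arXiv:1205.1752 — 4 statements merged into one kernel-verified Lean document; each statement's English description precedes it below -/
import Mathlib

section
/- Let G be a graph and S ⊆ V(G) a (k,τ)-regular set with τ > 0, and let λ be an eigenvalue of the adjacency matrix A(G). Then λ is non-main if and only if λ = k − τ or the characteristic vector of S is orthogonal to the eigenspace of A(G) associated with λ. -/
open scoped Classical

/-- Adjacency matrix of a simple graph over the reals. -/
noncomputable def adjMat {W : Type*} [Fintype W] (G : SimpleGraph W) : Matrix W W ℝ :=
  fun x y => if G.Adj x y then 1 else 0

/-- `μ` is an eigenvalue of the adjacency matrix of `G`. -/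
def IsEigen {W : Type*} [Fintype W] (G : SimpleGraph W) (μ : ℝ) : Prop :=
  ∃ v : W → ℝ, v ≠ 0 ∧ (adjMat G).mulVec v = μ • v

/-- Largest adjacency eigenvalue. -/
noncomputable def lamMax {W : Type*} [Fintype W] (G : SimpleGraph W) : ℝ :=
  sSup {μ | IsEigen G μ}

/-- Smallest adjacency eigenvalue. -/
noncomputable def lamMin {W : Type*} [Fintype W] (G : SimpleGraph W) : ℝ :=
  sInf {μ | IsEigen G μ}

/-- Spread of a graph: largest minus smallest adjacency eigenvalue. -/
noncomputable def spread {W : Type*} [Fintype W] (G : SimpleGraph W) : ℝ :=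
  lamMax G - lamMin G

/-- An eigenvalue is non-main if its eigenspace is orthogonal to the all-ones vector. -/
def IsNonMain {W : Type*} [Fintype W] (G : SimpleGraph W) (μ : ℝ) : Prop :=
  ∀ v : W → ℝ, (adjMat G).mulVec v = μ • v → ∑ i, v i = 0

/-- `S` is a `(k,τ)`-regular set in `G`. -/
def IsKTauRegularSet {W : Type*} [Fintype W] (G : SimpleGraph W) (S : Set W) (k τ : ℕ) : Prop :=
  (∀ i ∈ S, {j | j ∈ S ∧ G.Adj i j}.ncard = k) ∧
  (∀ i ∉ S, {j | j ∈ S ∧ G.Adj i j}.ncard = τ)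

/-- Characteristic vector of a vertex subset. -/
noncomputable def charVec {W : Type*} (S : Set W) : W → ℝ :=
  fun i => if i ∈ S then 1 else 0

/-- `G` is `d`-regular (each row of the adjacency matrix sums to `d`). -/
def IsReg {W : Type*} [Fintype W] (G : SimpleGraph W) (d : ℕ) : Prop :=
  ∀ i, ∑ j, adjMat G i j = (d : ℝ)

/-- Adjacency spectrum of `G` as a multiset (roots of the characteristic polynomial). -/
noncomputable def specMul {W : Type*} [Fintype W] (G : SimpleGraph W) : Multiset ℝ :=
  (adjMat G).charpoly.roots

/-- The `(H, 𝒮)`-generalized join of the family `G` constrained by vertex subsets `S`. -/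
def genJoin {p : ℕ} {V : Fin p → Type*} (H : SimpleGraph (Fin p))
    (G : ∀ i, SimpleGraph (V i)) (S : ∀ i, Set (V i)) : SimpleGraph (Σ i, V i) where
  Adj x y :=
    (∃ (i : Fin p) (a b : V i), x = ⟨i, a⟩ ∧ y = ⟨i, b⟩ ∧ (G i).Adj a b) ∨
    (x.1 ≠ y.1 ∧ H.Adj x.1 y.1 ∧ x.2 ∈ S x.1 ∧ y.2 ∈ S y.1)
  symm := by
    constructor
    rintro x y (⟨i, a, b, rfl, rfl, hab⟩ | ⟨hne, hH, hx, hy⟩)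
    · exact Or.inl ⟨i, b, a, rfl, rfl, hab.symm⟩
    · exact Or.inr ⟨hne.symm, hH.symm, hy, hx⟩
  loopless := by
    constructor
    rintro x (⟨i, a, b, rfl, h2, hab⟩ | ⟨hne, _⟩)
    · obtain ⟨rfl⟩ := heq_iff_eq.mp (Sigma.mk.inj_iff.mp h2).2
      exact (G i).irrefl hab
    · exact hne rfl

/-- The join of two vertex-disjoint graphs. -/
def joinG {A B : Type*} (G1 : SimpleGraph A) (G2 : SimpleGraph B) : SimpleGraph (A ⊕ B) where
  Adj x y :=
    match x, y with
    | .inl a, .inl b => G1.Adj a b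
    | .inr a, .inr b => G2.Adj a b
    | .inl _, .inr _ => True
    | .inr _, .inl _ => True
  symm := by
    constructor
    rintro (a | a) (b | b) h
    · exact h.symm
    · trivial
    · trivial
    · exact h.symm
  loopless := by
    constructor
    rintro (a | a) h
    · exact G1.irrefl h
    · exact G2.irrefl h

/-- `μ` is an eigenvalue of the real matrix `M`. -/
def matEigen {p : ℕ} (M : Matrix (Fin p) (Fin p) ℝ) (μ : ℝ) : Prop :=
  ∃ v : Fin p → ℝ, v ≠ 0 ∧ M.mulVec v = μ • v

noncomputable def matMax {p : ℕ} (M : Matrix (Fin p) (Fin p) ℝ) : ℝ :=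
  sSup {μ | matEigen M μ}

noncomputable def matMin {p : ℕ} (M : Matrix (Fin p) (Fin p) ℝ) : ℝ :=
  sInf {μ | matEigen M μ}

noncomputable def matSpread {p : ℕ} (M : Matrix (Fin p) (Fin p) ℝ) : ℝ :=
  matMax M - matMin M

/-- The matrix `M = A(H) N + D` associated with an `H`-join of regular graphs. -/
noncomputable def Mjoin {p : ℕ} (H : SimpleGraph (Fin p)) (n d : Fin p → ℕ) :
    Matrix (Fin p) (Fin p) ℝ :=
  adjMat H * Matrix.diagonal (fun i => (n i : ℝ)) + Matrix.diagonal (fun i => (d i : ℝ))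

/-- Average degree of a graph. -/
noncomputable def avgDeg {W : Type*} [Fintype W] (G : SimpleGraph W) : ℝ :=
  2 * G.edgeSet.ncard / Fintype.card W

/-- The graph `G(n,k) = K_k ∨ K̄_{n-k}`. -/
def Gnk (n k : ℕ) : SimpleGraph (Fin k ⊕ Fin (n - k)) :=
  joinG (⊤ : SimpleGraph (Fin k)) (⊥ : SimpleGraph (Fin (n - k)))


lemma adj_mulVec_charVec {W : Type*} [Fintype W] (G : SimpleGraph W) (S : Set W) (k τ : ℕ)
    (hS : IsKTauRegularSet G S k τ) (i : W) :
    (adjMat G).mulVec (charVec S) i = ((k : ℝ) - τ) * charVec S i + τ := by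
  have hcard : (adjMat G).mulVec (charVec S) i
      = (({j | j ∈ S ∧ G.Adj i j}).ncard : ℝ) := by
    rw [Matrix.mulVec, dotProduct]
    have : {j | j ∈ S ∧ G.Adj i j}.ncard
        = (Finset.univ.filter (fun j => j ∈ S ∧ G.Adj i j)).card := by
      rw [Set.ncard_eq_toFinset_card']
      congr 1
      ext j
      simp
    rw [this, Finset.card_filter]
    push_cast
    apply Finset.sum_congr rfl
    intro j _
    simp only [adjMat, charVec]
    by_cases h1 : G.Adj i j <;> by_cases h2 : j ∈ S <;> simp [h1, h2]
  by_cases hi : i ∈ S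
  · rw [hcard, hS.1 i hi]
    simp [charVec, hi]
  · rw [hcard, hS.2 i hi]
    simp [charVec, hi]

lemma key_identity {W : Type*} [Fintype W] (G : SimpleGraph W) (S : Set W) (k τ : ℕ)
    (hS : IsKTauRegularSet G S k τ) (μ : ℝ) (v : W → ℝ)
    (hv : (adjMat G).mulVec v = μ • v) :
    (τ : ℝ) * ∑ i, v i = (μ - ((k : ℝ) - τ)) * ∑ i, charVec S i * v i := by
  have hsym : ∀ i j, adjMat G i j = adjMat G j i := by
    intro i j
    simp only [adjMat]
    by_cases h : G.Adj i j
    · simp [h, h.symm]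
    · have h' : ¬ G.Adj j i := fun hh => h hh.symm
      simp [h, h']
  have e1 : ∑ i, (adjMat G).mulVec (charVec S) i * v i
      = ∑ i, charVec S i * (adjMat G).mulVec v i := by
    simp only [Matrix.mulVec, dotProduct, Finset.sum_mul, Finset.mul_sum]
    rw [Finset.sum_comm]
    apply Finset.sum_congr rfl; intro i _
    apply Finset.sum_congr rfl; intro j _
    rw [hsym j i]; ring
  have e2 : ∑ i, (adjMat G).mulVec (charVec S) i * v i
      = ((k : ℝ) - τ) * (∑ i, charVec S i * v i) + τ * ∑ i, v i := by
    rw [Finset.mul_sum, Finset.mul_sum, ← Finset.sum_add_distrib]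
    apply Finset.sum_congr rfl
    intro i _
    rw [adj_mulVec_charVec G S k τ hS i]
    ring
  have e3 : ∑ i, charVec S i * (adjMat G).mulVec v i
      = μ * ∑ i, charVec S i * v i := by
    rw [hv, Finset.mul_sum]
    apply Finset.sum_congr rfl
    intro i _
    simp [Pi.smul_apply, smul_eq_mul]; ring
  rw [e2, e3] at e1
  linarith [e1]

/-- For a `(k,τ)`-regular set `S` with `τ > 0` and an eigenvalue `μ` of `A(G)`,
`μ` is non-main iff `μ = k - τ` or the characteristic vector of `S` is orthogonal to the
eigenspace of `μ`. -/
theorem stmt0 {W : Type*} [Fintype W] (G : SimpleGraph W) (S : Set W) (k τ : ℕ)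
    (hτ : 0 < τ) (hS : IsKTauRegularSet G S k τ) (μ : ℝ) (hμ : IsEigen G μ) :
    IsNonMain G μ ↔ μ = (k : ℝ) - (τ : ℝ) ∨
      ∀ v : W → ℝ, (adjMat G).mulVec v = μ • v → ∑ i, charVec S i * v i = 0 := by
  have hτ' : (τ : ℝ) ≠ 0 := by positivity
  constructor
  · intro hnm
    by_cases hcase : μ = (k : ℝ) - τ
    · exact Or.inl hcase
    · refine Or.inr fun v hv => ?_
      have hkey := key_identity G S k τ hS μ v hv
      rw [hnm v hv, mul_zero] at hkey
      have : μ - ((k : ℝ) - τ) ≠ 0 := sub_ne_zero.mpr hcase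
      exact (mul_eq_zero.mp hkey.symm).resolve_left this
  · rintro (hcase | horth) v hv
    · have hkey := key_identity G S k τ hS μ v hv
      rw [hcase, sub_self, zero_mul] at hkey
      exact (mul_eq_zero.mp hkey).resolve_left hτ'
    · have hkey := key_identity G S k τ hS μ v hv
      rw [horth v hv, mul_zero] at hkey
      exact (mul_eq_zero.mp hkey).resolve_left hτ'
end

section
/- Let H be a graph on vertices {1,…,p} and G_1,…,G_p arbitrary graphs. Let G be the H-join of G_1,…,G_p (the generalized join with S_i = V(G_i) for all i). If λ is a non-main eigenvalue of some G_i, then λ is an eigenvalue of G. -/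
open scoped Classical

/-- non-main eigenvalues of the parts survive in the `H`-join. -/
theorem stmt2 {p : ℕ} {V : Fin p → Type*} [∀ i, Fintype (V i)]
    (H : SimpleGraph (Fin p)) (G : ∀ i, SimpleGraph (V i))
    (i : Fin p) (μ : ℝ) (hnm : IsNonMain (G i) μ) (he : IsEigen (G i) μ) :
    IsEigen (genJoin H G (fun _ => Set.univ)) μ := by
  obtain ⟨v, hv0, hv⟩ := he
  have hsum : ∑ a, v a = 0 := hnm v hv
  have hAdj : ∀ a b : V i, (genJoin H G (fun _ => Set.univ)).Adj ⟨i, a⟩ ⟨i, b⟩ ↔ (G i).Adj a b := by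
    intro a b
    constructor
    · rintro (⟨i', a', b', h1, h2, hab⟩ | ⟨hne, _⟩)
      · obtain ⟨hi, ha⟩ := Sigma.mk.inj_iff.mp h1
        subst hi
        obtain ⟨_, hb⟩ := Sigma.mk.inj_iff.mp h2
        rw [heq_iff_eq] at ha hb
        subst ha; subst hb; exact hab
      · exact absurd rfl hne
    · exact fun h => Or.inl ⟨i, a, b, rfl, rfl, h⟩
  have hAdj2 : ∀ (j : Fin p) (a : V j) (b : V i), j ≠ i →
      ((genJoin H G (fun _ => Set.univ)).Adj ⟨j, a⟩ ⟨i, b⟩ ↔ H.Adj j i) := by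
    intro j a b hji
    constructor
    · rintro (⟨i', a', b', h1, h2, hab⟩ | ⟨_, hH, _⟩)
      · obtain ⟨hi, _⟩ := Sigma.mk.inj_iff.mp h1
        obtain ⟨hi2, _⟩ := Sigma.mk.inj_iff.mp h2
        exact absurd (hi.trans hi2.symm) hji
      · exact hH
    · exact fun h => Or.inr ⟨hji, h, Set.mem_univ _, Set.mem_univ _⟩
  refine ⟨fun x => if h : x.1 = i then v (h ▸ x.2) else 0, ?_, ?_⟩
  · obtain ⟨a, ha⟩ := Function.ne_iff.mp hv0
    intro hcon
    apply ha
    have := congrFun hcon ⟨i, a⟩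
    simpa using this
  · funext x
    obtain ⟨j, a⟩ := x
    simp only [Matrix.mulVec, dotProduct, Pi.smul_apply, smul_eq_mul]
    rw [← Finset.univ_sigma_univ, Finset.sum_sigma]
    rw [Finset.sum_eq_single i]
    · simp only [dif_pos rfl]
      by_cases hji : j = i
      · subst hji
        simp only [dif_pos rfl]
        have : ∀ b : V j, adjMat (genJoin H G (fun _ => Set.univ)) ⟨j, a⟩ ⟨j, b⟩
            = adjMat (G j) a b := by
          intro b
          simp only [adjMat, hAdj a b]
        rw [Finset.sum_congr rfl (fun b _ => by rw [this b])]
        have := congrFun hv a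
        simpa [Matrix.mulVec, dotProduct] using this
      · simp only [dif_neg hji]
        have : ∀ b : V i, adjMat (genJoin H G (fun _ => Set.univ)) ⟨j, a⟩ ⟨i, b⟩
            = (if H.Adj j i then 1 else 0) := by
          intro b
          simp only [adjMat, hAdj2 j a b hji]
        rw [Finset.sum_congr rfl (fun b _ => by rw [this b])]
        simp only [dite_true]
        rw [← Finset.mul_sum, hsum, mul_zero, mul_zero]
    · intro j' _ hj'
      apply Finset.sum_eq_zero
      intro b _
      rw [dif_neg hj', mul_zero]
    · intro h
      exact absurd (Finset.mem_univ i) h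
end

section
/- Among the graphs G(n,k) = K_k ∨ K̄_{n−k} with 1 ≤ k ≤ n−1, the spread s(G(n,k)) = √((k−1)² + 4k(n−k)) is maximized exactly at k = ⌊2n/3⌋. -/
open scoped Classical

lemma adj_ll (n k : ℕ) (a b : Fin k) :
    adjMat (Gnk n k) (Sum.inl a) (Sum.inl b) = if a = b then 0 else 1 := by
  by_cases hb : a = b <;> simp [adjMat, Gnk, joinG, hb]

lemma adj_lr (n k : ℕ) (a : Fin k) (c : Fin (n-k)) :
    adjMat (Gnk n k) (Sum.inl a) (Sum.inr c) = 1 := by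
  simp [adjMat, Gnk, joinG]

lemma mulVec_inl (n k : ℕ) (v : Fin k ⊕ Fin (n-k) → ℝ) (a : Fin k) :
    (adjMat (Gnk n k)).mulVec v (Sum.inl a) =
      (∑ b, v (Sum.inl b)) - v (Sum.inl a) + ∑ c, v (Sum.inr c) := by
  simp only [Matrix.mulVec, dotProduct, Fintype.sum_sum_type, adj_ll, adj_lr, one_mul,
    ite_mul, zero_mul]
  have h1 : ∀ x : Fin k, (if a = x then (0:ℝ) else v (Sum.inl x))
      = v (Sum.inl x) - (if a = x then v (Sum.inl x) else 0) := by
    intro x; by_cases h : a = x <;> simp [h]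
  simp only [h1, Finset.sum_sub_distrib, Finset.sum_ite_eq]
  simp

lemma mulVec_inr (n k : ℕ) (v : Fin k ⊕ Fin (n-k) → ℝ) (c : Fin (n-k)) :
    (adjMat (Gnk n k)).mulVec v (Sum.inr c) = ∑ b, v (Sum.inl b) := by
  simp only [Matrix.mulVec, dotProduct, Fintype.sum_sum_type, adjMat, Gnk, joinG]
  simp

lemma spread_Gnk (n k : ℕ) (hk1 : 1 ≤ k) (hkn : k + 1 ≤ n) :
    spread (Gnk n k) = Real.sqrt (((k:ℝ)-1)^2 + 4*k*((n:ℝ)-k)) := by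
  set K : ℝ := (k:ℝ) with hK
  set N : ℝ := (n:ℝ) with hN
  have hK1 : (1:ℝ) ≤ K := by rw [hK]; exact_mod_cast hk1
  have hNK : K + 1 ≤ N := by rw [hK, hN]; exact_mod_cast hkn
  set D : ℝ := (K-1)^2 + 4*K*(N-K) with hD
  have hD0 : 0 ≤ D := by nlinarith
  set R : ℝ := Real.sqrt D with hR
  have hR2 : R^2 = D := Real.sq_sqrt hD0
  have hRge : K + 1 ≤ R := by
    rw [hR, show K + 1 = Real.sqrt ((K+1)^2) from (Real.sqrt_sq (by linarith)).symm]
    apply Real.sqrt_le_sqrt; nlinarith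
  set lp : ℝ := ((K-1)+R)/2 with hlp
  set lm : ℝ := ((K-1)-R)/2 with hlm
  have hp_pos : 0 < lp := by rw [hlp]; nlinarith
  have hm_le : lm ≤ -1 := by rw [hlm]; nlinarith
  have hml : lm ≤ lp := by rw [hlm, hlp]; nlinarith
  have hquad : ∀ x : ℝ, (x - lp)*(x - lm) = x^2 - (K-1)*x - K*(N-K) := by
    intro x; rw [hlp, hlm]; linear_combination (-(1:ℝ)/4) * hR2
  have hcast : ((n - k : ℕ) : ℝ) = N - K := by
    rw [Nat.cast_sub (by omega)]
  -- membership
  have hmem : ∀ μ : ℝ, μ ≠ 0 → μ^2 = (K-1)*μ + K*(N-K) → IsEigen (Gnk n k) μ := by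
    intro μ hμ hq
    refine ⟨Sum.elim (fun _ => μ) (fun _ => K), ?_, ?_⟩
    · intro h0
      apply hμ
      have := congrFun h0 (Sum.inl ⟨0, hk1⟩)
      simpa using this
    · funext x
      cases x with
      | inl a =>
        rw [mulVec_inl]
        simp only [Sum.elim_inl, Sum.elim_inr, Finset.sum_const, Finset.card_univ,
          Fintype.card_fin, nsmul_eq_mul, Pi.smul_apply, smul_eq_mul]
        rw [hcast, ← hK]
        linear_combination -hq
      | inr c =>
        rw [mulVec_inr]
        simp only [Sum.elim_inl, Sum.elim_inr, Finset.sum_const, Finset.card_univ,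
          Fintype.card_fin, nsmul_eq_mul, Pi.smul_apply, smul_eq_mul]
        rw [← hK]
        ring
  -- bound
  have hbound : ∀ μ : ℝ, IsEigen (Gnk n k) μ → lm ≤ μ ∧ μ ≤ lp := by
    rintro μ ⟨v, hv0, hv⟩
    set S1 : ℝ := ∑ b, v (Sum.inl b) with hS1d
    set S2 : ℝ := ∑ c, v (Sum.inr c) with hS2d
    have ha : ∀ a : Fin k, S1 - v (Sum.inl a) + S2 = μ * v (Sum.inl a) := by
      intro a
      have := congrFun hv (Sum.inl a)
      rw [mulVec_inl] at this
      simpa using this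
    have hc : ∀ c : Fin (n-k), S1 = μ * v (Sum.inr c) := by
      intro c
      have := congrFun hv (Sum.inr c)
      rw [mulVec_inr] at this
      simpa using this
    have hsum1 : K*S1 - S1 + K*S2 = μ*S1 := by
      have h := Finset.sum_congr (rfl : (Finset.univ : Finset (Fin k)) = Finset.univ)
        (fun a _ => ha a)
      simp only [Finset.sum_add_distrib, Finset.sum_sub_distrib, Finset.sum_const,
        Finset.card_univ, Fintype.card_fin, nsmul_eq_mul, ← Finset.mul_sum] at h
      rw [← hK] at h
      linarith [h]
    have hsum2 : (N-K)*S1 = μ*S2 := by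
      have h := Finset.sum_congr (rfl : (Finset.univ : Finset (Fin (n-k))) = Finset.univ)
        (fun c _ => hc c)
      simp only [Finset.sum_const, Finset.card_univ, Fintype.card_fin, nsmul_eq_mul,
        ← Finset.mul_sum] at h
      rw [hcast] at h
      exact h
    by_cases hS : S1 = 0 ∧ S2 = 0
    · obtain ⟨h1, h2⟩ := hS
      obtain ⟨x, hx⟩ := Function.ne_iff.mp hv0
      cases x with
      | inl a =>
        have h := ha a
        rw [h1, h2] at h
        have hμ : μ = -1 := by
          have : (μ + 1) * v (Sum.inl a) = 0 := by linarith
          rcases mul_eq_zero.mp this with h' | h'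
          · linarith
          · exact absurd h' hx
        constructor <;> [linarith; linarith]
      | inr c =>
        have h := hc c
        rw [h1] at h
        have hμ : μ = 0 := by
          rcases mul_eq_zero.mp h.symm with h' | h'
          · exact h'
          · exact absurd h' hx
        constructor <;> [linarith; linarith]
    · have hS1 : S1 ≠ 0 := by
        intro h1
        apply hS
        refine ⟨h1, ?_⟩
        rw [h1] at hsum1
        have : K * S2 = 0 := by linarith
        rcases mul_eq_zero.mp this with h' | h'
        · linarith
        · exact h'
      have hq0 : S1 * (μ^2 - (K-1)*μ - K*(N-K)) = 0 := by
        linear_combination (-μ) * hsum1 + (-K) * hsum2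
      have hq : μ^2 - (K-1)*μ - K*(N-K) = 0 := by
        rcases mul_eq_zero.mp hq0 with h' | h'
        · exact absurd h' hS1
        · exact h'
      have : (μ - lp) * (μ - lm) = 0 := by rw [hquad]; exact hq
      rcases mul_eq_zero.mp this with h' | h'
      · have : μ = lp := by linarith
        constructor <;> linarith
      · have : μ = lm := by linarith
        constructor <;> linarith
  have hlp_ne : lp ≠ 0 := ne_of_gt hp_pos
  have hlm_ne : lm ≠ 0 := by intro h; rw [h] at hm_le; linarith
  have hq_p : lp^2 = (K-1)*lp + K*(N-K) := by
    linear_combination hquad lp + ((1:ℝ)/2) * hR2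
  have hq_m : lm^2 = (K-1)*lm + K*(N-K) := by
    linear_combination hquad lm + ((1:ℝ)/2) * hR2
  have hgreat : IsGreatest {μ | IsEigen (Gnk n k) μ} lp :=
    ⟨hmem lp hlp_ne hq_p, fun μ hμ => (hbound μ hμ).2⟩
  have hleast : IsLeast {μ | IsEigen (Gnk n k) μ} lm :=
    ⟨hmem lm hlm_ne hq_m, fun μ hμ => (hbound μ hμ).1⟩
  show lamMax (Gnk n k) - lamMin (Gnk n k) = Real.sqrt D
  rw [lamMax, lamMin, hgreat.csSup_eq, hleast.csInf_eq, hlp, hlm, ← hR]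
  ring

lemma arith_lt (n k m : ℕ) (hm3 : 3*m ≤ 2*n) (hm3' : 2*n < 3*m+3) (hk1 : 1 ≤ k)
    (hk2 : k+1 ≤ n) (hne : k ≠ m) :
    ((k:ℝ)-1)^2 + 4*k*((n:ℝ)-k) < ((m:ℝ)-1)^2 + 4*m*((n:ℝ)-m) := by
  rcases lt_or_gt_of_ne hne with hlt | hgt
  · have c1 : (k:ℝ) + 1 ≤ m := by exact_mod_cast hlt
    have c2 : 3*((m:ℝ)+k) + 3 ≤ 4*n := by
      have : 3*(m+k) + 3 ≤ 4*n := by omega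
      exact_mod_cast this
    have e1 : (1:ℝ) ≤ (m:ℝ) - k := by linarith
    have e2 : (1:ℝ) ≤ 4*(n:ℝ) - 2 - 3*((m:ℝ)+k) := by linarith
    have hp : (1:ℝ)*1 ≤ ((m:ℝ)-k) * (4*(n:ℝ) - 2 - 3*((m:ℝ)+k)) :=
      mul_le_mul e1 e2 zero_le_one (by linarith)
    nlinarith [hp]
  · have c1 : (m:ℝ) + 1 ≤ k := by exact_mod_cast hgt
    have c2 : 4*(n:ℝ) ≤ 3*((m:ℝ)+k) + 1 := by
      have : 4*n ≤ 3*(m+k) + 1 := by omega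
      exact_mod_cast this
    have e1 : (1:ℝ) ≤ (k:ℝ) - m := by linarith
    have e2 : (1:ℝ) ≤ 3*((m:ℝ)+k) - (4*(n:ℝ) - 2) := by linarith
    have hp : (1:ℝ)*1 ≤ ((k:ℝ)-m) * (3*((m:ℝ)+k) - (4*(n:ℝ) - 2)) :=
      mul_le_mul e1 e2 zero_le_one (by linarith)
    nlinarith [hp]


/-- among `1 ≤ k ≤ n-1`, the spread of `G(n,k)` is maximized exactly at
`k = ⌊2n/3⌋`. -/
theorem stmt13 (n : ℕ) (hn : 2 ≤ n) :
    (∀ k, 1 ≤ k → k ≤ n - 1 → spread (Gnk n k) ≤ spread (Gnk n (2 * n / 3))) ∧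
    (∀ k, 1 ≤ k → k ≤ n - 1 → spread (Gnk n k) = spread (Gnk n (2 * n / 3)) →
      k = 2 * n / 3) := by
  set m := 2 * n / 3 with hm
  have hm3 : 3*m ≤ 2*n := by omega
  have hm3' : 2*n < 3*m + 3 := by omega
  have hm1 : 1 ≤ m := by omega
  have hm2 : m + 1 ≤ n := by omega
  have hnn : ∀ k : ℕ, 1 ≤ k → k + 1 ≤ n → (0:ℝ) ≤ ((k:ℝ)-1)^2 + 4*k*((n:ℝ)-k) := by
    intro k h1 h2
    have c1 : (1:ℝ) ≤ k := by exact_mod_cast h1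
    have c2 : (k:ℝ) + 1 ≤ n := by exact_mod_cast h2
    nlinarith
  constructor
  · intro k h1 h2
    have h2' : k + 1 ≤ n := by omega
    by_cases hk : k = m
    · rw [hk]
    · rw [spread_Gnk n k h1 h2', spread_Gnk n m hm1 hm2]
      exact le_of_lt (Real.sqrt_lt_sqrt (hnn k h1 h2') (arith_lt n k m hm3 hm3' h1 h2' hk))
  · intro k h1 h2 heq
    by_contra hk
    have h2' : k + 1 ≤ n := by omega
    rw [spread_Gnk n k h1 h2', spread_Gnk n m hm1 hm2] at heq
    have := Real.sqrt_lt_sqrt (hnn k h1 h2') (arith_lt n k m hm3 hm3' h1 h2' hk)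
    linarith
end

section
/- Let H be a graph of order p with at least one edge and G_i be d_i-regular graphs of order n_i, and G the H-join of G_1,…,G_p. Let n↓ = min n_i, d̃↑ = max (d_i/n_i), d̃↓ = min (d_i/n_i). Then s(G) ≥ n↓·(s(H) − (d̃↑ − d̃↓)). -/
open scoped Classical

open scoped InnerProductSpace
open Matrix
set_option linter.unusedSectionVars false

section Infra
variable {W : Type*} [Fintype W] [DecidableEq W]

def eigSet (M : Matrix W W ℝ) : Set ℝ := {μ | ∃ v : W → ℝ, v ≠ 0 ∧ M.mulVec v = μ • v}

lemma sum_dotProduct' (f : W → W → ℝ) (v : W → ℝ) :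
    (∑ i, f i) ⬝ᵥ v = ∑ i, f i ⬝ᵥ v := by
  simp only [dotProduct, Finset.sum_apply, Finset.sum_mul]
  rw [Finset.sum_comm]

lemma dotProduct_sum' (v : W → ℝ) (f : W → W → ℝ) :
    v ⬝ᵥ (∑ i, f i) = ∑ i, v ⬝ᵥ f i := by
  simp only [dotProduct, Finset.sum_apply, Finset.mul_sum]
  rw [Finset.sum_comm]

lemma basis_expand (b : OrthonormalBasis W ℝ (EuclideanSpace ℝ W)) (v : W → ℝ) :
    ∑ i, ((b i : W → ℝ) ⬝ᵥ v) • (b i : W → ℝ) = v := by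
  have h := b.sum_repr' ((WithLp.equiv 2 (W → ℝ)).symm v)
  have h2 : ∀ i, ⟪b i, (WithLp.equiv 2 (W → ℝ)).symm v⟫_ℝ = (b i : W → ℝ) ⬝ᵥ v := by
    intro i
    rw [PiLp.inner_apply]
    simp [dotProduct, mul_comm]
  simp_rw [h2] at h
  have h3 := congrArg (WithLp.linearEquiv 2 ℝ (W → ℝ)) h
  simpa [map_sum, map_smul] using h3

variable {M : Matrix W W ℝ}

lemma transpose_eq (hM : M.IsHermitian) : Mᵀ = M := by
  have := hM
  unfold Matrix.IsHermitian at this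
  simpa using this

lemma mulVec_basis (hM : M.IsHermitian) (i : W) :
    M.mulVec (hM.eigenvectorBasis i : W → ℝ)
      = hM.eigenvalues i • (hM.eigenvectorBasis i : W → ℝ) :=
  hM.mulVec_eigenvectorBasis i

lemma dot_self_expand (hM : M.IsHermitian) (v : W → ℝ) :
    v ⬝ᵥ v = ∑ i, ((hM.eigenvectorBasis i : W → ℝ) ⬝ᵥ v) ^ 2 := by
  conv_lhs => rw [← basis_expand hM.eigenvectorBasis v]
  rw [sum_dotProduct']
  refine Finset.sum_congr rfl fun i _ => ?_
  rw [basis_expand hM.eigenvectorBasis v, smul_dotProduct, smul_eq_mul, sq]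

lemma dot_mulVec_expand (hM : M.IsHermitian) (v : W → ℝ) :
    v ⬝ᵥ M.mulVec v = ∑ i, hM.eigenvalues i * ((hM.eigenvectorBasis i : W → ℝ) ⬝ᵥ v) ^ 2 := by
  set c : W → ℝ := fun i => (hM.eigenvectorBasis i : W → ℝ) ⬝ᵥ v with hc
  have hmv : M.mulVec v = ∑ i, (c i * hM.eigenvalues i) • (hM.eigenvectorBasis i : W → ℝ) := by
    conv_lhs => rw [← basis_expand hM.eigenvectorBasis v]
    rw [show M.mulVec (∑ i, c i • (hM.eigenvectorBasis i : W → ℝ))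
        = ∑ i, M.mulVec (c i • (hM.eigenvectorBasis i : W → ℝ)) from
      map_sum M.mulVecLin _ _]
    refine Finset.sum_congr rfl fun i _ => ?_
    rw [Matrix.mulVec_smul, mulVec_basis hM i, smul_smul]
  rw [hmv, dotProduct_sum']
  refine Finset.sum_congr rfl fun i _ => ?_
  rw [dotProduct_smul, smul_eq_mul, dotProduct_comm]
  ring

lemma eigSet_eq (hM : M.IsHermitian) : eigSet M = Set.range hM.eigenvalues := by
  ext μ
  constructor
  · rintro ⟨v, hv0, hv⟩
    have hex : ∃ i, (hM.eigenvectorBasis i : W → ℝ) ⬝ᵥ v ≠ 0 := by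
      by_contra h
      push_neg at h
      apply hv0
      rw [← basis_expand hM.eigenvectorBasis v]
      refine Finset.sum_eq_zero fun i _ => by rw [h i, zero_smul]
    obtain ⟨i, hi⟩ := hex
    have key : hM.eigenvalues i * ((hM.eigenvectorBasis i : W → ℝ) ⬝ᵥ v)
        = μ * ((hM.eigenvectorBasis i : W → ℝ) ⬝ᵥ v) := by
      have h1 : (hM.eigenvectorBasis i : W → ℝ) ⬝ᵥ M.mulVec v
          = μ * ((hM.eigenvectorBasis i : W → ℝ) ⬝ᵥ v) := by
        rw [hv, dotProduct_smul, smul_eq_mul]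
      have h2 : (hM.eigenvectorBasis i : W → ℝ) ⬝ᵥ M.mulVec v
          = hM.eigenvalues i * ((hM.eigenvectorBasis i : W → ℝ) ⬝ᵥ v) := by
        rw [Matrix.dotProduct_mulVec, ← Matrix.mulVec_transpose, transpose_eq hM,
          mulVec_basis hM i, smul_dotProduct, smul_eq_mul]
      rw [← h1, h2]
    exact ⟨i, (mul_right_cancel₀ hi key)⟩
  · rintro ⟨i, rfl⟩
    refine ⟨hM.eigenvectorBasis i, ?_, mulVec_basis hM i⟩
    intro h
    exact hM.eigenvectorBasis.orthonormal.ne_zero i (by ext j; simpa using congrFun h j)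

lemma rayleigh_le_sSup (hM : M.IsHermitian) (v : W → ℝ) :
    v ⬝ᵥ M.mulVec v ≤ sSup (eigSet M) * (v ⬝ᵥ v) := by
  rw [dot_mulVec_expand hM, dot_self_expand hM, Finset.mul_sum]
  refine Finset.sum_le_sum fun i _ => ?_
  refine mul_le_mul_of_nonneg_right ?_ (sq_nonneg _)
  exact le_csSup (eigSet_eq hM ▸ (Set.finite_range _).bddAbove)
    (eigSet_eq hM ▸ Set.mem_range_self i)

lemma sInf_le_rayleigh (hM : M.IsHermitian) (v : W → ℝ) :
    sInf (eigSet M) * (v ⬝ᵥ v) ≤ v ⬝ᵥ M.mulVec v := by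
  rw [dot_mulVec_expand hM, dot_self_expand hM, Finset.mul_sum]
  refine Finset.sum_le_sum fun i _ => ?_
  refine mul_le_mul_of_nonneg_right ?_ (sq_nonneg _)
  exact csInf_le (eigSet_eq hM ▸ (Set.finite_range _).bddBelow)
    (eigSet_eq hM ▸ Set.mem_range_self i)

lemma sSup_mem_eigSet (hM : M.IsHermitian) [Nonempty W] : sSup (eigSet M) ∈ eigSet M := by
  rw [eigSet_eq hM]
  exact (Set.range_nonempty _).csSup_mem ((Set.finite_range _))

lemma sInf_mem_eigSet (hM : M.IsHermitian) [Nonempty W] : sInf (eigSet M) ∈ eigSet M := by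
  rw [eigSet_eq hM]
  exact (Set.range_nonempty _).csInf_mem ((Set.finite_range _))

lemma adjMat_herm (G : SimpleGraph W) : (adjMat G).IsHermitian := by
  refine Matrix.ext fun i j => ?_
  simp only [Matrix.conjTranspose_apply, adjMat, star_trivial]
  rw [SimpleGraph.adj_comm]

lemma lamMax_eq (G : SimpleGraph W) : lamMax G = sSup (eigSet (adjMat G)) := rfl
lemma lamMin_eq (G : SimpleGraph W) : lamMin G = sInf (eigSet (adjMat G)) := rfl

end Infra


section EdgeRayleigh
variable {W : Type*} [Fintype W] [DecidableEq W]

lemma edge_vec (M : Matrix W W ℝ) (u v : W) (huv : u ≠ v) (c : ℝ)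
    (h0 : M u u = 0) (h1 : M v v = 0) (h2 : M u v = 1) (h3 : M v u = 1) :
    ∃ χ : W → ℝ, χ ≠ 0 ∧ χ ⬝ᵥ M.mulVec χ = 2 * c ∧ χ ⬝ᵥ χ = 1 + c ^ 2 := by
  set χ : W → ℝ := (Pi.single u 1 : W → ℝ) + c • (Pi.single v 1 : W → ℝ) with hχ
  have hχu : χ u = 1 := by
    simp [hχ, Pi.single_apply, huv.symm]
  refine ⟨χ, fun h => by simp [h] at hχu, ?_, ?_⟩
  · have hmv : M.mulVec χ = (fun z => M z u) + c • fun z => M z v := by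
      funext z
      simp [hχ, Matrix.mulVec_add, Matrix.mulVec_smul, Matrix.mulVec_single]
    rw [hmv, hχ]
    simp only [add_dotProduct, smul_dotProduct, dotProduct_add,
      dotProduct_smul, single_dotProduct, smul_eq_mul, Pi.add_apply,
      Pi.smul_apply, one_mul]
    simp [h0, h1, h2, h3, Pi.single_apply, huv, huv.symm]
    ring
  · rw [hχ]
    simp only [add_dotProduct, smul_dotProduct, dotProduct_add,
      dotProduct_smul, single_dotProduct, smul_eq_mul, Pi.add_apply,
      Pi.smul_apply]
    simp [Pi.single_apply, huv, huv.symm]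
    ring
end EdgeRayleigh

section Join
variable {p : ℕ} {V : Fin p → Type*} [∀ i, Fintype (V i)]
  (H : SimpleGraph (Fin p)) (G : ∀ i, SimpleGraph (V i))

lemma genJoin_adj_same {i : Fin p} {a b : V i} :
    (genJoin H G (fun _ => Set.univ)).Adj ⟨i,a⟩ ⟨i,b⟩ ↔ (G i).Adj a b := by
  constructor
  · rintro (⟨i', a', b', h1, h2, hab⟩ | ⟨hne, _⟩)
    · obtain ⟨rfl, ha⟩ := Sigma.mk.inj_iff.mp h1
      obtain ⟨_, hb⟩ := Sigma.mk.inj_iff.mp h2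
      obtain rfl := heq_iff_eq.mp ha
      obtain rfl := heq_iff_eq.mp hb
      exact hab
    · exact absurd rfl hne
  · exact fun h => Or.inl ⟨i, a, b, rfl, rfl, h⟩

lemma genJoin_adj_ne {i j : Fin p} (hij : i ≠ j) {a : V i} {b : V j} :
    (genJoin H G (fun _ => Set.univ)).Adj ⟨i,a⟩ ⟨j,b⟩ ↔ H.Adj i j := by
  constructor
  · rintro (⟨i', a', b', h1, h2, hab⟩ | ⟨_, hH, _⟩)
    · obtain ⟨rfl, -⟩ := Sigma.mk.inj_iff.mp h1
      obtain ⟨rfl, -⟩ := Sigma.mk.inj_iff.mp h2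
      exact absurd rfl hij
    · exact hH
  · exact fun h => Or.inr ⟨hij, h, trivial, trivial⟩

variable (d n : Fin p → ℕ)

lemma genJoin_row (hreg : ∀ i, IsReg (G i) (d i)) (hcard : ∀ i, Fintype.card (V i) = n i)
    (x : Fin p → ℝ) (i : Fin p) (a : V i) :
    ((adjMat (genJoin H G (fun _ => Set.univ))).mulVec (fun z => x z.1)) ⟨i,a⟩
      = d i * x i + ∑ j, adjMat H i j * ((n j : ℝ) * x j) := by
  have hsig : ∀ f : (Σ k, V k) → ℝ, ∑ z, f z = ∑ j, ∑ b : V j, f ⟨j, b⟩ := by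
    intro f
    rw [← Finset.univ_sigma_univ, Finset.sum_sigma]
  show ∑ z : Σ k, V k, adjMat (genJoin H G (fun _ => Set.univ)) ⟨i,a⟩ z * x z.1 = _
  rw [hsig]
  have hterm : ∀ j, (∑ b : V j, adjMat (genJoin H G (fun _ => Set.univ)) ⟨i,a⟩ ⟨j,b⟩ * x j)
      = (if j = i then (d i : ℝ) * x i else 0) + adjMat H i j * ((n j : ℝ) * x j) := by
    intro j
    by_cases hji : j = i
    · subst hji
      have hAH : adjMat H j j = 0 := by simp [adjMat]
      rw [hAH, if_pos rfl, zero_mul, add_zero]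
      have : ∀ b : V j, adjMat (genJoin H G (fun _ => Set.univ)) ⟨j,a⟩ ⟨j,b⟩
          = adjMat (G j) a b := by
        intro b
        simp only [adjMat, genJoin_adj_same]
      simp_rw [this, ← Finset.sum_mul, hreg j a]
    · rw [if_neg hji]
      have : ∀ b : V j, adjMat (genJoin H G (fun _ => Set.univ)) ⟨i,a⟩ ⟨j,b⟩
          = adjMat H i j := by
        intro b
        simp only [adjMat]
        rw [genJoin_adj_ne H G (Ne.symm hji)]
      simp_rw [this]
      rw [Finset.sum_const, Finset.card_univ, hcard j, nsmul_eq_mul]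
      ring
  rw [Finset.sum_congr rfl fun j _ => hterm j, Finset.sum_add_distrib,
    Finset.sum_ite_eq' Finset.univ i (fun _ => (d i : ℝ) * x i)]
  simp

lemma genJoin_dot (hreg : ∀ i, IsReg (G i) (d i)) (hcard : ∀ i, Fintype.card (V i) = n i)
    (x : Fin p → ℝ) :
    (fun z : Σ k, V k => x z.1) ⬝ᵥ
      ((adjMat (genJoin H G (fun _ => Set.univ))).mulVec (fun z => x z.1))
      = ∑ i, (n i : ℝ) * (x i * ((d i : ℝ) * x i + ∑ j, adjMat H i j * ((n j : ℝ) * x j))) := by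
  have hsig : ∀ f : (Σ k, V k) → ℝ, ∑ z, f z = ∑ j, ∑ b : V j, f ⟨j, b⟩ := by
    intro f
    rw [← Finset.univ_sigma_univ, Finset.sum_sigma]
  show ∑ z : Σ k, V k, x z.1 * _ = _
  rw [hsig]
  refine Finset.sum_congr rfl fun i _ => ?_
  have : ∀ b : V i, x i * ((adjMat (genJoin H G (fun _ => Set.univ))).mulVec
      (fun z => x z.1)) ⟨i,b⟩ = x i * ((d i : ℝ) * x i + ∑ j, adjMat H i j * ((n j : ℝ) * x j)) := by
    intro b
    rw [genJoin_row H G d n hreg hcard]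
  simp_rw [this]
  rw [Finset.sum_const, Finset.card_univ, hcard i, nsmul_eq_mul]

lemma genJoin_dot_self (hcard : ∀ i, Fintype.card (V i) = n i) (x : Fin p → ℝ) :
    (fun z : Σ k, V k => x z.1) ⬝ᵥ (fun z : Σ k, V k => x z.1)
      = ∑ i, (n i : ℝ) * x i ^ 2 := by
  have hsig : ∀ f : (Σ k, V k) → ℝ, ∑ z, f z = ∑ j, ∑ b : V j, f ⟨j, b⟩ := by
    intro f
    rw [← Finset.univ_sigma_univ, Finset.sum_sigma]
  show ∑ z : Σ k, V k, x z.1 * x z.1 = _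
  rw [hsig]
  refine Finset.sum_congr rfl fun i _ => ?_
  show ∑ _b : V i, x i * x i = _
  rw [Finset.sum_const, Finset.card_univ, hcard i, nsmul_eq_mul, sq]

end Join

/-- lower bound `s(G) ≥ n↓ (s(H) - (d̃↑ - d̃↓))` for the `H`-join, when `H` has
an edge. -/
theorem stmt15 {p : ℕ} (hp : 0 < p) {V : Fin p → Type*} [∀ i, Fintype (V i)]
    (H : SimpleGraph (Fin p)) (G : ∀ i, SimpleGraph (V i)) (d n : Fin p → ℕ)
    (hreg : ∀ i, IsReg (G i) (d i)) (hcard : ∀ i, Fintype.card (V i) = n i)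
    (hn : ∀ i, 0 < n i) (hedge : H.edgeSet.Nonempty) :
    spread (genJoin H G (fun _ => Set.univ)) ≥
      (⨅ i, (n i : ℝ)) *
        (spread H - ((⨆ i, (d i : ℝ) / (n i : ℝ)) - (⨅ i, (d i : ℝ) / (n i : ℝ)))) := by
  classical
  haveI hpne : Nonempty (Fin p) := ⟨⟨0, hp⟩⟩
  set GJ := genJoin H G (fun _ => Set.univ) with hGJ
  have hnR : ∀ i, (0:ℝ) < n i := fun i => by exact_mod_cast hn i
  have hneV : ∀ i, Nonempty (V i) := fun i => by
    rw [← Fintype.card_pos_iff, hcard i]; exact hn i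
  set N := ⨅ i, (n i : ℝ) with hN
  set Dup := ⨆ i, (d i : ℝ) / (n i : ℝ) with hDup
  set Ddn := ⨅ i, (d i : ℝ) / (n i : ℝ) with hDdn
  have hNle : ∀ i, N ≤ n i := fun i => ciInf_le (Set.finite_range _).bddBelow i
  have hN1 : (1:ℝ) ≤ N := le_ciInf fun i => by exact_mod_cast hn i
  have hNpos : (0:ℝ) < N := lt_of_lt_of_le one_pos hN1
  have hdlen : ∀ i, (d i : ℝ) ≤ n i := by
    intro i
    obtain ⟨a⟩ := hneV i
    have h := hreg i a
    calc (d i : ℝ) = ∑ j, adjMat (G i) a j := h.symm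
      _ ≤ ∑ _j : V i, 1 := Finset.sum_le_sum fun j _ => by
            simp only [adjMat]; split <;> norm_num
      _ = n i := by rw [Finset.sum_const, Finset.card_univ, hcard i, nsmul_eq_mul, mul_one]
  have hDdn0 : 0 ≤ Ddn := le_ciInf fun i => by positivity
  have hDdnle : ∀ i, Ddn ≤ (d i : ℝ)/(n i) := fun i => ciInf_le (Set.finite_range _).bddBelow i
  have hDuple : ∀ i, (d i:ℝ)/(n i) ≤ Dup := fun i =>
    hDup ▸ le_ciSup (Set.finite_range fun k => (d k : ℝ)/(n k : ℝ)).bddAbove i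
  have hDup1 : Dup ≤ 1 := ciSup_le fun i => div_le_one_of_le₀ (hdlen i) (hnR i).le
  -- edge of H
  have hEdge : ∃ u v, H.Adj u v := by
    obtain ⟨e, he⟩ := hedge
    induction e using Sym2.ind with
    | _ u v => exact ⟨u, v, he⟩
  obtain ⟨u, v, hHuv⟩ := hEdge
  have huv : u ≠ v := hHuv.ne
  have hAH := adjMat_herm H
  have hAGJ := adjMat_herm GJ
  have hAHuu : adjMat H u u = 0 := by simp [adjMat]
  have hAHvv : adjMat H v v = 0 := by simp [adjMat]
  have hAHuv : adjMat H u v = 1 := by simp [adjMat, hHuv]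
  have hAHvu : adjMat H v u = 1 := by simp [adjMat, hHuv.symm]
  have hl1 : 1 ≤ lamMax H := by
    obtain ⟨χ, hχ0, hχ1, hχ2⟩ := edge_vec (adjMat H) u v huv 1 hAHuu hAHvv hAHuv hAHvu
    have hray := rayleigh_le_sSup hAH χ
    rw [hχ1, hχ2, ← lamMax_eq] at hray
    nlinarith
  have hlp : lamMin H ≤ -1 := by
    obtain ⟨χ, hχ0, hχ1, hχ2⟩ := edge_vec (adjMat H) u v huv (-1) hAHuu hAHvv hAHuv hAHvu
    have hray := sInf_le_rayleigh hAH χ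
    rw [hχ1, hχ2, ← lamMin_eq] at hray
    nlinarith
  -- eigenvectors of H
  obtain ⟨y, hy0, hy⟩ : ∃ y : Fin p → ℝ, y ≠ 0 ∧ (adjMat H).mulVec y = lamMax H • y := by
    have h := sSup_mem_eigSet hAH
    rw [← lamMax_eq] at h
    exact h
  obtain ⟨y', hy'0, hy'⟩ : ∃ y : Fin p → ℝ, y ≠ 0 ∧ (adjMat H).mulVec y = lamMin H • y := by
    have h := sInf_mem_eigSet hAH
    rw [← lamMin_eq] at h
    exact h
  -- generic per-eigenvector computation
  have main : ∀ z : Fin p → ℝ, z ≠ 0 →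
      ∃ den : ℝ, 0 < den ∧ N * den ≤ ∑ i, z i ^ 2 ∧
        (∃ vv : (Σ k, V k) → ℝ, vv ≠ 0 ∧ vv ⬝ᵥ vv = den ∧
          vv ⬝ᵥ ((adjMat GJ).mulVec vv)
            = ∑ i, ((d i : ℝ) / n i) * z i ^ 2 + z ⬝ᵥ ((adjMat H).mulVec z)) := by
    intro z hz0
    set x : Fin p → ℝ := fun i => z i / n i with hx
    set vv : (Σ k, V k) → ℝ := fun w => x w.1 with hvv
    obtain ⟨i0, hi0⟩ := Function.ne_iff.mp hz0
    have hden : vv ⬝ᵥ vv = ∑ i, z i ^ 2 / n i := by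
      rw [hvv, genJoin_dot_self (V := V) n hcard x]
      refine Finset.sum_congr rfl fun i _ => ?_
      have h0 : (n i:ℝ) ≠ 0 := (hnR i).ne'
      rw [hx]
      field_simp
    refine ⟨∑ i, z i ^ 2 / n i, ?_, ?_, vv, ?_, hden, ?_⟩
    · refine Finset.sum_pos' (fun i _ => by positivity) ⟨i0, Finset.mem_univ _, ?_⟩
      have h1 := hnR i0
      have h2 : z i0 ≠ 0 := hi0
      positivity
    · rw [Finset.mul_sum]
      refine Finset.sum_le_sum fun i _ => ?_
      calc N * (z i ^ 2 / n i) ≤ (n i : ℝ) * (z i ^ 2 / n i) :=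
            mul_le_mul_of_nonneg_right (hNle i) (by positivity)
        _ = z i ^ 2 := by
            rw [mul_div_assoc']
            exact mul_div_cancel_left₀ _ (hnR i).ne'
    · intro h
      obtain ⟨a⟩ := hneV i0
      have : vv ⟨i0, a⟩ = 0 := by rw [h]; rfl
      rw [hvv] at this
      simp only [hx] at this
      exact hi0 (by
        rcases div_eq_zero_iff.mp this with h' | h'
        · exact h'
        · exact absurd h' (ne_of_gt (hnR i0)))
    · rw [hvv, genJoin_dot (V := V) H G d n hreg hcard x]
      have hterm : ∀ i, (n i : ℝ) * (x i * ((d i : ℝ) * x i + ∑ j, adjMat H i j * ((n j : ℝ) * x j)))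
          = ((d i : ℝ) / n i) * z i ^ 2 + z i * ∑ j, adjMat H i j * z j := by
        intro i
        have hnx : ∀ j, (n j : ℝ) * x j = z j := fun j => by
          have h0 : (n j:ℝ) ≠ 0 := (hnR j).ne'
          rw [hx]; field_simp
        rw [show (∑ j, adjMat H i j * ((n j : ℝ) * x j)) = ∑ j, adjMat H i j * z j from
          Finset.sum_congr rfl fun j _ => by rw [hnx j]]
        have h1 : (n i : ℝ) ≠ 0 := ne_of_gt (hnR i)
        rw [hx]
        field_simp
      rw [Finset.sum_congr rfl fun i _ => hterm i, Finset.sum_add_distrib]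
      rfl
    -- MAX side
  have hmax : N * (lamMax H + Ddn) ≤ lamMax GJ := by
    set w : Fin p → ℝ := fun i => |y i| with hw
    have hw0 : w ≠ 0 := by
      intro h
      apply hy0
      funext i
      have h2 : w i = 0 := by rw [h]; rfl
      rw [hw] at h2
      exact abs_eq_zero.mp h2
    obtain ⟨den, hdpos, hdle, vv, hvv0, hvvden, hvvnum⟩ := main w hw0
    have hwsq : ∀ i, w i ^ 2 = y i ^ 2 := fun i => sq_abs _
    set S := ∑ i, y i ^ 2 with hS
    have hSw : ∑ i, w i ^ 2 = S := Finset.sum_congr rfl fun i _ => hwsq i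
    have hyy : y ⬝ᵥ y = S := by simp [dotProduct, hS, sq]
    have hcross : lamMax H * S ≤ w ⬝ᵥ ((adjMat H).mulVec w) := by
      have h1 : y ⬝ᵥ ((adjMat H).mulVec y) = lamMax H * S := by
        rw [hy, dotProduct_smul, smul_eq_mul, hyy]
      rw [← h1]
      refine Finset.sum_le_sum fun i _ => ?_
      show y i * ∑ j, adjMat H i j * y j ≤ w i * ∑ j, adjMat H i j * w j
      rw [Finset.mul_sum, Finset.mul_sum]
      refine Finset.sum_le_sum fun j _ => ?_
      have hA0 : 0 ≤ adjMat H i j := by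
        simp only [adjMat]; split <;> norm_num
      calc y i * (adjMat H i j * y j) = adjMat H i j * (y i * y j) := by ring
        _ ≤ adjMat H i j * (w i * w j) := by
            refine mul_le_mul_of_nonneg_left ?_ hA0
            calc y i * y j ≤ |y i * y j| := le_abs_self _
              _ = w i * w j := by rw [abs_mul]
        _ = w i * (adjMat H i j * w j) := by ring
    have hdiag : Ddn * S ≤ ∑ i, ((d i : ℝ) / n i) * w i ^ 2 := by
      rw [← hSw, Finset.mul_sum]
      exact Finset.sum_le_sum fun i _ => mul_le_mul_of_nonneg_right (hDdnle i) (sq_nonneg _)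
    have hnum : (Ddn + lamMax H) * S ≤ vv ⬝ᵥ ((adjMat GJ).mulVec vv) := by
      rw [hvvnum, show (Ddn + lamMax H) * S = Ddn * S + lamMax H * S from by ring]
      exact add_le_add hdiag hcross
    have hray := rayleigh_le_sSup hAGJ vv
    rw [hvvden, ← lamMax_eq] at hray
    have hc0 : 0 ≤ Ddn + lamMax H := by linarith
    have k1 : (Ddn + lamMax H) * (N * den) ≤ (Ddn + lamMax H) * S :=
      mul_le_mul_of_nonneg_left (le_trans hdle (le_of_eq hSw)) hc0
    have k2 : ((Ddn + lamMax H) * N) * den ≤ lamMax GJ * den := by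
      rw [mul_assoc]
      exact le_trans k1 (le_trans hnum hray)
    have k3 := le_of_mul_le_mul_right k2 hdpos
    linarith [k3]
  -- MIN side
  have hmin : lamMin GJ ≤ N * (lamMin H + Dup) := by
    obtain ⟨den, hdpos, hdle, vv, hvv0, hvvden, hvvnum⟩ := main y' hy'0
    set S := ∑ i, y' i ^ 2 with hS
    have hyy : y' ⬝ᵥ y' = S := by simp [dotProduct, hS, sq]
    have hcrosseq : y' ⬝ᵥ ((adjMat H).mulVec y') = lamMin H * S := by
      rw [hy', dotProduct_smul, smul_eq_mul, hyy]
    have hdiag : ∑ i, ((d i : ℝ) / n i) * y' i ^ 2 ≤ Dup * S := by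
      rw [hS, Finset.mul_sum]
      exact Finset.sum_le_sum fun i _ => mul_le_mul_of_nonneg_right (hDuple i) (sq_nonneg _)
    have hnum : vv ⬝ᵥ ((adjMat GJ).mulVec vv) ≤ (Dup + lamMin H) * S := by
      rw [hvvnum, hcrosseq, show (Dup + lamMin H) * S = Dup * S + lamMin H * S from by ring]
      exact add_le_add hdiag le_rfl
    have hray := sInf_le_rayleigh hAGJ vv
    rw [hvvden, ← lamMin_eq] at hray
    have hc0 : Dup + lamMin H ≤ 0 := by linarith
    have k1 : (Dup + lamMin H) * S ≤ (Dup + lamMin H) * (N * den) :=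
      mul_le_mul_of_nonpos_left hdle hc0
    have k2 : lamMin GJ * den ≤ ((Dup + lamMin H) * N) * den := by
      rw [mul_assoc]
      exact le_trans hray (le_trans hnum k1)
    have k3 := le_of_mul_le_mul_right k2 hdpos
    linarith [k3]
  show spread GJ ≥ N * (spread H - (Dup - Ddn))
  unfold spread
  have hfinal : N * ((lamMax H - lamMin H) - (Dup - Ddn))
      = N * (lamMax H + Ddn) - N * (lamMin H + Dup) := by ring
  linarith [hmax, hmin]
end
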